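/- Suppose c : [0,∞) → ℝ³ is twice differentiable and satisfies c̈ = λ(t)(c − r) + g for a fixed constant r ∈ ℝ³ and a scalar function λ. Then the Gram determinant G(t) = ((c(t) − r) × ċ(t)) · g is constant in time. -/
import Mathlib


open Matrix

/-- For the variable-height inverted pendulum with a stationary CoP `r`,
i.e. `c̈ = λ(t)(c − r) + g`, the Gram determinant `G(t) = ((c(t) − r) × ċ(t)) · g` is
constant in time. -/
theorem fixed_cop_gram_invariant (lam : ℝ → ℝ) (r g : Fin 3 → ℝ)
    (c c' : ℝ → (Fin 3 → ℝ))
    (hc : ∀ t : ℝ, HasDerivAt c (c' t) t)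
    (hc' : ∀ t : ℝ, HasDerivAt c' (lam t • (c t - r) + g) t) :
    ∀ s t : ℝ, (crossProduct (c s - r) (c' s)) ⬝ᵥ g
      = (crossProduct (c t - r) (c' t)) ⬝ᵥ g := by
  set f : ℝ → ℝ := fun t =>
    ((c t 1 - r 1) * c' t 2 - (c t 2 - r 2) * c' t 1) * g 0
    + ((c t 2 - r 2) * c' t 0 - (c t 0 - r 0) * c' t 2) * g 1
    + ((c t 0 - r 0) * c' t 1 - (c t 1 - r 1) * c' t 0) * g 2 with hf
  have hci : ∀ t (i : Fin 3), HasDerivAt (fun t => c t i) (c' t i) t := by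
    intro t i; exact (hasDerivAt_pi.mp (hc t)) i
  have hci' : ∀ t (i : Fin 3), HasDerivAt (fun t => c' t i)
      (lam t * (c t i - r i) + g i) t := by
    intro t i
    have := (hasDerivAt_pi.mp (hc' t)) i
    simpa [Pi.add_apply, Pi.smul_apply, Pi.sub_apply, smul_eq_mul] using this
  have hderiv : ∀ t, HasDerivAt f 0 t := by
    intro t
    have h : HasDerivAt f
        (((c' t 1) * c' t 2 + (c t 1 - r 1) * (lam t * (c t 2 - r 2) + g 2)
          - ((c' t 2) * c' t 1 + (c t 2 - r 2) * (lam t * (c t 1 - r 1) + g 1))) * g 0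
        + ((c' t 2) * c' t 0 + (c t 2 - r 2) * (lam t * (c t 0 - r 0) + g 0)
          - ((c' t 0) * c' t 2 + (c t 0 - r 0) * (lam t * (c t 2 - r 2) + g 2))) * g 1
        + ((c' t 0) * c' t 1 + (c t 0 - r 0) * (lam t * (c t 1 - r 1) + g 1)
          - ((c' t 1) * c' t 0 + (c t 1 - r 1) * (lam t * (c t 0 - r 0) + g 0))) * g 2) t := by
      apply HasDerivAt.add
      apply HasDerivAt.add
      · exact ((((hci t 1).sub_const (r 1)).mul (hci' t 2)).sub
          (((hci t 2).sub_const (r 2)).mul (hci' t 1))).mul_const (g 0)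
      · exact ((((hci t 2).sub_const (r 2)).mul (hci' t 0)).sub
          (((hci t 0).sub_const (r 0)).mul (hci' t 2))).mul_const (g 1)
      · exact ((((hci t 0).sub_const (r 0)).mul (hci' t 1)).sub
          (((hci t 1).sub_const (r 1)).mul (hci' t 0))).mul_const (g 2)
    convert h using 1
    ring
  have hconst : ∀ s t : ℝ, f s = f t := by
    intro s t
    exact is_const_of_deriv_eq_zero (fun x => (hderiv x).differentiableAt)
      (fun x => (hderiv x).deriv) s t
  intro s t
  have hs : (crossProduct (c s - r) (c' s)) ⬝ᵥ g = f s := by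
    simp [crossProduct, dotProduct, Fin.sum_univ_three, hf]; ring
  have ht : (crossProduct (c t - r) (c' t)) ⬝ᵥ g = f t := by
    simp [crossProduct, dotProduct, Fin.sum_univ_three, hf]; ring
  rw [hs, ht]; exact hconst s t
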